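/- Let G be a locally compact Hausdorff topological group with left Haar measure m. Let S_1 ⊆ S_2 ⊆ ⋯ ⊆ S_N be measurable subsets of G with m(S_N) < ∞, let β_1,…,β_N ≥ 0, and set f = ∑_{k=1}^N β_k χ_{S_k}. Let s_1,…,s_n ∈ G and set F = {s_1,…,s_n}. Then ∫_G max_{1≤i≤n} f(s_i^{-1} t) dm(t) = ∑_{k=1}^N β_k · m(F S_k), where F S_k = ⋃_{i=1}^n s_i S_k. (Equivalently: the weak (1,1)-multi-norm of the tuple of translates (s_1·f,…,s_n·f) in L^1(G,m) equals ∑_{k=1}^N β_k m(F S_k).) -/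

import Mathlib

open MeasureTheory Set
open scoped ENNReal NNReal Pointwise

/-- let `G` be a locally compact Hausdorff group with left Haar measure `m`,
let `S_1 ⊆ ⋯ ⊆ S_N` be measurable subsets of `G` of finite measure, let `β_k ≥ 0`, and set
`f = ∑ β_k χ_{S_k}`.  For `s_1,…,s_n ∈ G` (with `F = {s_1,…,s_n}`):
`∫_G max_i f(s_i⁻¹ t) dm(t) = ∑_k β_k · m(F S_k)`, where `F S_k = ⋃_i s_i S_k`.
(The left-hand side is the weak `(1,1)`-multi-norm of the tuple of translates
`(s_1·f,…,s_n·f)` in `L^1(G,m)`.) -/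
theorem stmt14 (G : Type*) [Group G] [TopologicalSpace G] [IsTopologicalGroup G]
    [LocallyCompactSpace G] [T2Space G] [MeasurableSpace G] [BorelSpace G]
    (m : Measure G) [m.IsHaarMeasure]
    (N : ℕ) (S : Fin N → Set G) (hSm : ∀ k, MeasurableSet (S k))
    (hmono : ∀ k l : Fin N, k ≤ l → S k ⊆ S l)
    (hSfin : ∀ k, m (S k) < ⊤)
    (β : Fin N → ℝ) (hβ : ∀ k, 0 ≤ β k)
    (n : ℕ) (s : Fin n → G) :
    (∫ t, (⨆ i, ∑ k, β k * (S k).indicator (fun _ => (1 : ℝ)) ((s i)⁻¹ * t)) ∂m) =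
      ∑ k, β k * (m (⋃ i, (s i) • S k)).toReal := by
  classical
  set T : Fin N → Set G := fun k => ⋃ i, (s i) • S k with hT
  have hTm : ∀ k, MeasurableSet (T k) := fun k =>
    MeasurableSet.iUnion fun i => (hSm k).const_smul (s i)
  have hsubT : ∀ (i : Fin n) (k : Fin N), (s i) • S k ⊆ T k := fun i k x hx =>
    Set.mem_iUnion.mpr ⟨i, hx⟩
  have hTfin : ∀ k, m (T k) < ⊤ := by
    intro k
    calc m (T k) ≤ ∑ i, m ((s i) • S k) := measure_iUnion_fintype_le _ _
      _ = ∑ _i : Fin n, m (S k) := by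
          exact Finset.sum_congr rfl fun i _ => MeasureTheory.measure_smul m (s i) (S k)
      _ < ⊤ := ENNReal.sum_lt_top.mpr fun i _ => hSfin k
  have key : ∀ t, (⨆ i, ∑ k, β k * (S k).indicator (fun _ => (1:ℝ)) ((s i)⁻¹ * t))
      = ∑ k, β k * (T k).indicator (fun _ => (1:ℝ)) t := by
    intro t
    have hmem : ∀ (i : Fin n) (k : Fin N), (S k).indicator (fun _ => (1:ℝ)) ((s i)⁻¹ * t)
        = ((s i) • S k).indicator (fun _ => (1:ℝ)) t := by
      intro i k
      simp only [Set.indicator_apply]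
      congr 1
      simp [Set.mem_smul_set_iff_inv_smul_mem]
    simp only [hmem]
    rcases isEmpty_or_nonempty (Fin n) with hn | hn
    · simp [hT, Set.iUnion_of_empty, Real.iSup_of_isEmpty]
    · set g : Fin n → ℝ := fun i => ∑ k, β k * ((s i) • S k).indicator (fun _ => (1:ℝ)) t
        with hg
      have hub : ∀ i, g i ≤ ∑ k, β k * (T k).indicator (fun _ => (1:ℝ)) t := by
        intro i
        refine Finset.sum_le_sum fun k _ => ?_
        refine mul_le_mul_of_nonneg_left ?_ (hβ k)
        exact Set.indicator_le_indicator_of_subset (hsubT i k) (fun _ => zero_le_one) t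
      by_cases hK : ∃ k, t ∈ T k
      · obtain ⟨Kf, hKne⟩ : ∃ Kf : Finset (Fin N), Kf = Finset.univ.filter (fun k => t ∈ T k) :=
          ⟨_, rfl⟩
        have hKfne : Kf.Nonempty := by
          obtain ⟨k, hk⟩ := hK
          exact ⟨k, by simp [hKne, hk]⟩
        have hKmem : ∀ k, k ∈ Kf ↔ t ∈ T k := fun k => by simp [hKne]
        set k₀ := Kf.min' hKfne with hk₀
        have hk₀mem : t ∈ T k₀ := (hKmem k₀).mp (Kf.min'_mem hKfne)
        obtain ⟨i₀, hi₀⟩ : ∃ i, t ∈ (s i) • S k₀ := by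
          simpa [hT, Set.mem_iUnion] using hk₀mem
        have hattain : g i₀ = ∑ k, β k * (T k).indicator (fun _ => (1:ℝ)) t := by
          refine Finset.sum_congr rfl fun k _ => ?_
          by_cases hk : t ∈ T k
          · have hkK : k ∈ Kf := (hKmem k).mpr hk
            have : k₀ ≤ k := Kf.min'_le k hkK
            have hsub : (s i₀) • S k₀ ⊆ (s i₀) • S k := Set.smul_set_mono (hmono _ _ this)
            rw [Set.indicator_of_mem (hsub hi₀), Set.indicator_of_mem hk]
          · have : t ∉ (s i₀) • S k := fun h => hk (Set.mem_iUnion.mpr ⟨i₀, h⟩)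
            rw [Set.indicator_of_notMem this, Set.indicator_of_notMem hk]
        refine le_antisymm (ciSup_le hub) ?_
        rw [← hattain]
        exact le_ciSup (Set.Finite.bddAbove (Set.finite_range g)) i₀
      · push_neg at hK
        have hz : ∀ i, g i = 0 := by
          intro i
          refine Finset.sum_eq_zero fun k _ => ?_
          have : t ∉ (s i) • S k := fun h => hK k (Set.mem_iUnion.mpr ⟨i, h⟩)
          simp [Set.indicator_of_notMem this]
        have hz' : ∑ k, β k * (T k).indicator (fun _ => (1:ℝ)) t = 0 :=
          Finset.sum_eq_zero fun k _ => by simp [Set.indicator_of_notMem (hK k)]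
        rw [hz', show g = fun _ => (0:ℝ) from funext hz]
        exact ciSup_const
  simp only [key]
  have hint : ∀ k : Fin N, Integrable ((T k).indicator (fun _ => (1:ℝ))) m := by
    intro k
    rw [integrable_indicator_iff (hTm k)]
    exact integrableOn_const (hTfin k).ne
  rw [integral_finset_sum _ fun k _ => (hint k).const_mul (β k)]
  refine Finset.sum_congr rfl fun k _ => ?_
  rw [integral_const_mul, integral_indicator_const _ (hTm k)]
  simp [Measure.real, hT]
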